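/- Let G be a real symmetric 4×4 matrix with exactly one negative eigenvalue λ₀ < 0 and three positive eigenvalues λ₁, λ₂, λ₃ > 0. Let c > 0 and e ∈ ℝ⁴ satisfy e ⬝ (G e) = -1/c². Then for every nonzero z orthogonal to e (i.e. e ⬝ z = 0) one has z ⬝ (G⁻¹ z) > 0. -/

import Mathlib

open Matrix

lemma stmt4_cs3 (x1 x2 x3 y1 y2 y3 : ℝ) :
    (x1*y1 + x2*y2 + x3*y3)^2 ≤ (x1^2 + x2^2 + x3^2) * (y1^2 + y2^2 + y3^2) := by
  nlinarith [sq_nonneg (x1*y2 - x2*y1), sq_nonneg (x1*y3 - x3*y1), sq_nonneg (x2*y3 - x3*y2)]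

lemma stmt4_aux (L0 L1 L2 L3 a0 a1 a2 a3 b0 b1 b2 b3 : ℝ)
    (hL0 : L0 < 0) (hL1 : 0 < L1) (hL2 : 0 < L2) (hL3 : 0 < L3)
    (hE : L0*a0^2 + L1*a1^2 + L2*a2^2 + L3*a3^2 < 0)
    (hO : a0*b0 + a1*b1 + a2*b2 + a3*b3 = 0)
    (hb : b0 ≠ 0 ∨ b1 ≠ 0 ∨ b2 ≠ 0 ∨ b3 ≠ 0) :
    0 < b0^2/L0 + b1^2/L1 + b2^2/L2 + b3^2/L3 := by
  have hs1 : (Real.sqrt L1)^2 = L1 := Real.sq_sqrt hL1.le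
  have hs2 : (Real.sqrt L2)^2 = L2 := Real.sq_sqrt hL2.le
  have hs3 : (Real.sqrt L3)^2 = L3 := Real.sq_sqrt hL3.le
  have hs1p : 0 < Real.sqrt L1 := Real.sqrt_pos.mpr hL1
  have hs2p : 0 < Real.sqrt L2 := Real.sqrt_pos.mpr hL2
  have hs3p : 0 < Real.sqrt L3 := Real.sqrt_pos.mpr hL3
  have cs' : (a0*b0)^2 ≤ (L1*a1^2 + L2*a2^2 + L3*a3^2) * (b1^2/L1 + b2^2/L2 + b3^2/L3) := by
    have cs := stmt4_cs3 (Real.sqrt L1 * a1) (Real.sqrt L2 * a2) (Real.sqrt L3 * a3)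
      (b1 / Real.sqrt L1) (b2 / Real.sqrt L2) (b3 / Real.sqrt L3)
    have e1 : Real.sqrt L1 * a1 * (b1 / Real.sqrt L1) = a1 * b1 := by
      field_simp
    have e2 : Real.sqrt L2 * a2 * (b2 / Real.sqrt L2) = a2 * b2 := by
      field_simp
    have e3 : Real.sqrt L3 * a3 * (b3 / Real.sqrt L3) = a3 * b3 := by
      field_simp
    rw [e1, e2, e3, mul_pow, mul_pow, mul_pow, div_pow, div_pow, div_pow,
      hs1, hs2, hs3] at cs
    have hP : a1*b1 + a2*b2 + a3*b3 = -(a0*b0) := by linarith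
    rw [hP, neg_sq] at cs
    exact cs
  have h1 : 0 ≤ b1^2/L1 := by positivity
  have h2 : 0 ≤ b2^2/L2 := by positivity
  have h3 : 0 ≤ b3^2/L3 := by positivity
  have g1 : 0 ≤ L1*a1^2 := by positivity
  have g2 : 0 ≤ L2*a2^2 := by positivity
  have g3 : 0 ≤ L3*a3^2 := by positivity
  have hS_lt : L1*a1^2 + L2*a2^2 + L3*a3^2 < -(L0 * a0^2) := by linarith
  by_cases hb0 : b0 = 0
  · have hTpos : 0 < b1^2/L1 + b2^2/L2 + b3^2/L3 := by
      rcases hb with h | h | h | h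
      · exact absurd hb0 h
      · have : 0 < b1^2 := by positivity
        have := div_pos this hL1
        linarith
      · have : 0 < b2^2 := by positivity
        have := div_pos this hL2
        linarith
      · have : 0 < b3^2 := by positivity
        have := div_pos this hL3
        linarith
    rw [hb0]
    rw [show (0:ℝ)^2 = 0 by ring, zero_div]
    linarith
  · have ha0 : a0 ≠ 0 := by
      intro h
      rw [h] at hE
      nlinarith
    have ha0sq : 0 < a0^2 := by positivity
    have hb0sq : 0 < b0^2 := by positivity
    have hST : 0 < (L1*a1^2 + L2*a2^2 + L3*a3^2) * (b1^2/L1 + b2^2/L2 + b3^2/L3) :=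
      lt_of_lt_of_le (by positivity) cs'
    have hSpos : 0 < L1*a1^2 + L2*a2^2 + L3*a3^2 := by
      rcases (lt_or_eq_of_le (by linarith : (0:ℝ) ≤ L1*a1^2 + L2*a2^2 + L3*a3^2)) with h | h
      · exact h
      · exfalso; rw [← h, zero_mul] at hST; exact lt_irrefl 0 hST
    have hTpos : 0 < b1^2/L1 + b2^2/L2 + b3^2/L3 := by
      rcases (lt_or_eq_of_le (by linarith : (0:ℝ) ≤ b1^2/L1 + b2^2/L2 + b3^2/L3)) with h | h
      · exact h
      · exfalso; rw [← h, mul_zero] at hST; exact lt_irrefl 0 hST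
    have hkey : b0^2 < (b1^2/L1 + b2^2/L2 + b3^2/L3) * (-L0) := by
      have h7 : a0^2 * b0^2 < a0^2 * ((b1^2/L1 + b2^2/L2 + b3^2/L3) * (-L0)) := by
        calc a0^2 * b0^2 = (a0*b0)^2 := by ring
        _ ≤ (L1*a1^2 + L2*a2^2 + L3*a3^2) * (b1^2/L1 + b2^2/L2 + b3^2/L3) := cs'
        _ < (-(L0 * a0^2)) * (b1^2/L1 + b2^2/L2 + b3^2/L3) :=
            mul_lt_mul_of_pos_right hS_lt hTpos
        _ = a0^2 * ((b1^2/L1 + b2^2/L2 + b3^2/L3) * (-L0)) := by ring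
      exact lt_of_mul_lt_mul_left h7 (le_of_lt ha0sq)
    have hnegL0 : (0:ℝ) < -L0 := by linarith
    have hdiv : b0^2 / (-L0) < b1^2/L1 + b2^2/L2 + b3^2/L3 :=
      (div_lt_iff₀ hnegL0).mpr hkey
    have hrw : b0^2 / (-L0) = -(b0^2 / L0) := by
      rw [div_neg]
    rw [hrw] at hdiv
    linarith


theorem stmt4 (G : Matrix (Fin 4) (Fin 4) ℝ) (hGsymm : G.IsSymm)
    (lam : Fin 4 → ℝ) (u : Fin 4 → Fin 4 → ℝ)
    (horth : ∀ k l, u k ⬝ᵥ u l = if k = l then (1 : ℝ) else 0)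
    (heig : ∀ k, G.mulVec (u k) = lam k • u k)
    (hneg : lam 0 < 0) (hpos : ∀ i : Fin 4, i ≠ 0 → 0 < lam i)
    (c : ℝ) (hc : 0 < c) (e : Fin 4 → ℝ)
    (he : e ⬝ᵥ G.mulVec e = -1 / c ^ 2) :
    ∀ z : Fin 4 → ℝ, z ≠ 0 → e ⬝ᵥ z = 0 →
      0 < z ⬝ᵥ G⁻¹.mulVec z := by
  intro z hz hez
  have hlamne : ∀ i, lam i ≠ 0 := by
    intro i
    by_cases hi : i = 0
    · subst hi; exact ne_of_lt hneg
    · exact ne_of_gt (hpos i hi)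
  set U : Matrix (Fin 4) (Fin 4) ℝ := Matrix.of u with hUdef
  have hUUT : U * Uᵀ = 1 := by
    ext k l
    simpa [hUdef, Matrix.mul_apply, Matrix.one_apply, dotProduct] using horth k l
  have hUTU : Uᵀ * U = 1 := mul_eq_one_comm.mp hUUT
  set D : Matrix (Fin 4) (Fin 4) ℝ := Matrix.diagonal lam with hDdef
  set D' : Matrix (Fin 4) (Fin 4) ℝ := Matrix.diagonal (fun i => (lam i)⁻¹) with hD'def
  have hDD' : D * D' = 1 := by
    rw [hDdef, hD'def, Matrix.diagonal_mul_diagonal]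
    rw [show (fun i => lam i * (lam i)⁻¹) = fun _ => (1:ℝ) by
      funext i; exact mul_inv_cancel₀ (hlamne i)]
    exact Matrix.diagonal_one
  have hGU : G * Uᵀ = Uᵀ * D := by
    ext j k
    have h := congrFun (heig k) j
    simp [hUdef, hDdef, Matrix.mul_apply, Matrix.mulVec, dotProduct] at h ⊢
    rw [h]
    simp [Matrix.diagonal, mul_ite, Finset.sum_ite_eq, mul_comm]
  have hG : G = Uᵀ * D * U := by
    calc G = G * (Uᵀ * U) := by rw [hUTU, mul_one]
    _ = (G * Uᵀ) * U := by rw [mul_assoc]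
    _ = Uᵀ * D * U := by rw [hGU]
  have hGinv : G⁻¹ = Uᵀ * D' * U := by
    apply inv_eq_right_inv
    calc G * (Uᵀ * D' * U) = Uᵀ * D * (U * Uᵀ) * D' * U := by
          rw [hG]; noncomm_ring
    _ = Uᵀ * (D * D') * U := by rw [hUUT]; noncomm_ring
    _ = 1 := by rw [hDD', mul_one, hUTU]
  have key : ∀ (M : Matrix (Fin 4) (Fin 4) ℝ) (v w : Fin 4 → ℝ),
      (Uᵀ.mulVec v) ⬝ᵥ (Uᵀ * M * U).mulVec (Uᵀ.mulVec w) = v ⬝ᵥ M.mulVec w := by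
    intro M v w
    rw [Matrix.mulVec_mulVec]
    have h1 : Uᵀ * M * U * Uᵀ = Uᵀ * M := by rw [mul_assoc, hUUT, mul_one]
    rw [h1, Matrix.dotProduct_mulVec, ← Matrix.vecMul_vecMul,
      Matrix.vecMul_transpose, Matrix.mulVec_mulVec, hUUT, Matrix.one_mulVec,
      ← Matrix.dotProduct_mulVec]
  set a : Fin 4 → ℝ := U.mulVec e with hadef
  set b : Fin 4 → ℝ := U.mulVec z with hbdef
  have hzb : z = Uᵀ.mulVec b := by
    rw [hbdef, Matrix.mulVec_mulVec, hUTU, Matrix.one_mulVec]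
  have hea : e = Uᵀ.mulVec a := by
    rw [hadef, Matrix.mulVec_mulVec, hUTU, Matrix.one_mulVec]
  have hbne : b ≠ 0 := by
    intro h
    apply hz
    rw [hzb, h, Matrix.mulVec_zero]
  have he2 : a ⬝ᵥ D.mulVec a = -1 / c ^ 2 := by
    rw [← key D a a, ← hea, ← hG, he]
  have hz2 : z ⬝ᵥ G⁻¹.mulVec z = b ⬝ᵥ D'.mulVec b := by
    conv_lhs => rw [hzb, hGinv]
    exact key D' b b
  have hab : a ⬝ᵥ b = 0 := by
    have h1 : Uᵀ * 1 * U = 1 := by rw [mul_one, hUTU]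
    have := key 1 a b
    rw [h1, ← hea, ← hzb, Matrix.one_mulVec, Matrix.one_mulVec, hez] at this
    exact this.symm
  rw [hz2]
  have he3 : lam 0 * a 0^2 + lam 1 * a 1^2 + lam 2 * a 2^2 + lam 3 * a 3^2 < 0 := by
    have hexp : a ⬝ᵥ D.mulVec a
        = lam 0 * a 0^2 + lam 1 * a 1^2 + lam 2 * a 2^2 + lam 3 * a 3^2 := by
      simp [hDdef, dotProduct, Matrix.mulVec_diagonal, Fin.sum_univ_four]
      ring
    have hc2 : (0:ℝ) < c^2 := by positivity
    have hneg1 : (-1:ℝ)/c^2 < 0 := div_neg_of_neg_of_pos (by norm_num) hc2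
    rw [hexp] at he2
    linarith [he2, hneg1]
  have hab3 : a 0 * b 0 + a 1 * b 1 + a 2 * b 2 + a 3 * b 3 = 0 := by
    simpa [dotProduct, Fin.sum_univ_four] using hab
  have hbor : b 0 ≠ 0 ∨ b 1 ≠ 0 ∨ b 2 ≠ 0 ∨ b 3 ≠ 0 := by
    by_contra h
    push_neg at h
    apply hbne
    funext i
    fin_cases i <;> simp [h.1, h.2.1, h.2.2.1, h.2.2.2]
  have hgoal : b ⬝ᵥ D'.mulVec b
      = b 0^2/lam 0 + b 1^2/lam 1 + b 2^2/lam 2 + b 3^2/lam 3 := by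
    simp [hD'def, dotProduct, Matrix.mulVec_diagonal, Fin.sum_univ_four,
      div_eq_inv_mul]
    ring
  rw [hgoal]
  exact stmt4_aux (lam 0) (lam 1) (lam 2) (lam 3) (a 0) (a 1) (a 2) (a 3)
    (b 0) (b 1) (b 2) (b 3) hneg (hpos 1 (by decide)) (hpos 2 (by decide))
    (hpos 3 (by decide)) he3 hab3 hbor
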